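/- (Fourier slice theorem) For f ∈ 𝒮(ℝⁿ), τ ∈ ℝ, and ξ ∈ S^{n-1}, the n-dimensional Fourier transform of f evaluated at τξ equals the 1-dimensional Fourier transform of the tomogram f^♯_ξ evaluated at τ: f̂(τξ) = (f^♯_ξ)^(τ). -/

import Mathlib

open MeasureTheory Complex
open scoped RealInnerProductSpace

/-- The Radon tomogram of `f` along the unit vector `ξ` at signed distance `X`. -/
noncomputable def tomogram {n : ℕ} (f : EuclideanSpace ℝ (Fin n) → ℝ)
    (ξ : EuclideanSpace ℝ (Fin n)) (X : ℝ) : ℝ :=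
  ∫ y : ((ℝ ∙ ξ)ᗮ : Submodule ℝ (EuclideanSpace ℝ (Fin n))),
    f (X • ξ + (y : EuclideanSpace ℝ (Fin n)))

set_option maxHeartbeats 1000000 in
/-- Fourier slice theorem: `f̂(τξ) = (f^♯_ξ)^(τ)`, where
`f̂(k) = ∫ f(x) e^{-i k·x} dx` and `ĝ(τ) = ∫ g(X) e^{-i τ X} dX`. -/
theorem fourier_slice {n : ℕ} (f : SchwartzMap (EuclideanSpace ℝ (Fin n)) ℝ)
    (τ : ℝ) (ξ : EuclideanSpace ℝ (Fin n)) (hξ : ‖ξ‖ = 1) :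
    (∫ x : EuclideanSpace ℝ (Fin n), (f x : ℂ) * Complex.exp (-Complex.I * (⟪τ • ξ, x⟫ : ℝ)))
      = ∫ X : ℝ, (tomogram (fun x => f x) ξ X : ℂ) * Complex.exp (-Complex.I * (τ * X)) := by
  classical
  have hξ0 : ξ ≠ 0 := fun h => by simp [h] at hξ
  set K : Submodule ℝ (EuclideanSpace ℝ (Fin n)) := (ℝ ∙ ξ)ᗮ with hK
  have hfin : 1 + Module.finrank ℝ K = n := by
    have h2 := Submodule.finrank_add_finrank_orthogonal (K := (ℝ ∙ ξ))
    rw [finrank_span_singleton hξ0, finrank_euclideanSpace_fin] at h2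
    rw [hK]; exact h2
  obtain ⟨m, rfl⟩ : ∃ m, n = m + 1 := ⟨Module.finrank ℝ K, by omega⟩
  have hm : Module.finrank ℝ K = m := by omega
  set b : OrthonormalBasis (Fin m) ℝ K := (stdOrthonormalBasis ℝ K).reindex (finCongr hm)
    with hb
  set v : Fin (m + 1) → EuclideanSpace ℝ (Fin (m + 1)) := Fin.cons ξ (fun j => (b j : EuclideanSpace ℝ (Fin (m + 1)))) with hv
  have hbξ : ∀ j : Fin m, ⟪ξ, (b j : EuclideanSpace ℝ (Fin (m + 1)))⟫ = 0 := fun j =>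
    (Submodule.mem_orthogonal _ _).1 (b j).2 ξ (Submodule.mem_span_singleton_self ξ)
  have hvon : Orthonormal ℝ v := by
    rw [orthonormal_iff_ite]
    intro i j
    refine Fin.cases ?_ ?_ i <;> [skip; intro i'] <;> refine Fin.cases ?_ ?_ j <;>
      try intro j'
    · rw [if_pos rfl]
      show ⟪v 0, v 0⟫ = 1
      rw [hv]; simp only [Fin.cons_zero]
      rw [real_inner_self_eq_norm_sq, hξ]; norm_num
    · rw [if_neg (Fin.succ_ne_zero j').symm]
      show ⟪v 0, v (Fin.succ j')⟫ = 0
      rw [hv]; simp only [Fin.cons_zero, Fin.cons_succ]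
      exact hbξ j'
    · rw [if_neg (Fin.succ_ne_zero i')]
      show ⟪v (Fin.succ i'), v 0⟫ = 0
      rw [hv]; simp only [Fin.cons_zero, Fin.cons_succ]
      rw [real_inner_comm]; exact hbξ i'
    · show ⟪v (Fin.succ i'), v (Fin.succ j')⟫ = _
      rw [hv]; simp only [Fin.cons_succ]
      have := b.orthonormal
      rw [orthonormal_iff_ite] at this
      rw [← Submodule.coe_inner, this i' j']
      simp [Fin.succ_inj]
  have hcard : Fintype.card (Fin (m + 1)) = Module.finrank ℝ (EuclideanSpace ℝ (Fin (m + 1))) := by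
    simp [finrank_euclideanSpace_fin]
  set B : OrthonormalBasis (Fin (m + 1)) ℝ (EuclideanSpace ℝ (Fin (m + 1))) :=
    (basisOfOrthonormalOfCardEqFinrank hvon hcard).toOrthonormalBasis
      (by rwa [coe_basisOfOrthonormalOfCardEqFinrank]) with hB
  have hBv : ⇑B = v := by
    rw [hB, Module.Basis.coe_toOrthonormalBasis, coe_basisOfOrthonormalOfCardEqFinrank]
  set Φ : (ℝ × K) ≃ᵐ EuclideanSpace ℝ (Fin (m + 1)) :=
    ((MeasurableEquiv.refl ℝ).prodCongr b.measurableEquiv).trans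
      ((((MeasurableEquiv.refl ℝ).prodCongr (MeasurableEquiv.toLp 2 (Fin m → ℝ)).symm).trans
        (((MeasurableEquiv.piFinSuccAbove (fun _ : Fin (m + 1) => ℝ) 0).symm).trans
          (((MeasurableEquiv.toLp 2 (Fin (m + 1) → ℝ)).symm.symm).trans
            B.measurableEquiv.symm)))) with hΦ
  have hΦmp : MeasurePreserving Φ volume volume := by
    have h1 : MeasurePreserving (Prod.map (id : ℝ → ℝ) b.measurableEquiv)
        volume volume :=
      (MeasurePreserving.id _).prod b.measurePreserving_measurableEquiv
    have h2 : MeasurePreserving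
        (Prod.map (id : ℝ → ℝ) (MeasurableEquiv.toLp 2 (Fin m → ℝ)).symm) volume volume :=
      (MeasurePreserving.id _).prod (EuclideanSpace.volume_preserving_symm_measurableEquiv_toLp _)
    have h3 := (volume_preserving_piFinSuccAbove (fun _ : Fin (m + 1) => ℝ) 0).symm
    have h4 := (EuclideanSpace.volume_preserving_symm_measurableEquiv_toLp (Fin (m + 1))).symm
    have h5 := B.measurePreserving_measurableEquiv.symm
    exact h5.comp (h4.comp (h3.comp (h2.comp h1)))
  have hΦap : ∀ (t : ℝ) (y : K), Φ (t, y) = t • ξ + (y : EuclideanSpace ℝ (Fin (m + 1))) := by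
    intro t y
    have h0 : Φ (t, y) = B.repr.symm
        ((WithLp.equiv 2 _).symm (Fin.insertNth 0 t (fun j => b.repr y j))) := rfl
    rw [h0, ← B.sum_repr_symm, Fin.sum_univ_succ]
    have e0 : ∀ (z : Fin (m + 1) → ℝ),
        ((WithLp.equiv 2 (Fin (m + 1) → ℝ)).symm z : Fin (m + 1) → ℝ) = z := fun _ => rfl
    simp only [e0]
    rw [Fin.insertNth_apply_same, hBv, hv]
    simp only [Fin.cons_zero, Fin.cons_succ]
    congr 1
    have hsum : ∀ j : Fin m, Fin.insertNth (α := fun _ : Fin (m + 1) => ℝ) 0 t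
        (fun j => b.repr y j) j.succ = b.repr y j := fun j =>
      Fin.insertNth_apply_succAbove (α := fun _ : Fin (m + 1) => ℝ) 0 t _ j
    simp only [hsum]
    have : ∑ j : Fin m, b.repr y j • ((b j : EuclideanSpace ℝ (Fin (m + 1))))
        = ((∑ j : Fin m, b.repr y j • b j : K) : EuclideanSpace ℝ (Fin (m + 1))) := by push_cast; rfl
    rw [this, b.sum_repr_symm, LinearIsometryEquiv.symm_apply_apply]
  -- the integrand
  set g : EuclideanSpace ℝ (Fin (m + 1)) → ℂ := fun x => (f x : ℂ) * Complex.exp (-Complex.I * (⟪τ • ξ, x⟫ : ℝ)) with hg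
  have hph : Continuous fun x : EuclideanSpace ℝ (Fin (m + 1)) => Complex.exp (-Complex.I * (⟪τ • ξ, x⟫ : ℝ)) := by
    apply Complex.continuous_exp.comp
    exact continuous_const.mul (Complex.continuous_ofReal.comp
      (continuous_const.inner continuous_id))
  have hphnorm : ∀ x : EuclideanSpace ℝ (Fin (m + 1)), ‖Complex.exp (-Complex.I * (⟪τ • ξ, x⟫ : ℝ))‖ ≤ 1 := by
    intro x
    rw [Complex.norm_exp]
    simp
  have hgint : Integrable g := by
    have hf : Integrable (fun x : EuclideanSpace ℝ (Fin (m + 1)) => (f x : ℂ)) := (f.integrable).ofReal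
    have := hf.bdd_mul (c := 1) hph.aestronglyMeasurable (Filter.Eventually.of_forall hphnorm)
    simpa [hg, mul_comm] using this
  have hinner : ∀ (t : ℝ) (y : K), ⟪τ • ξ, t • ξ + (y : EuclideanSpace ℝ (Fin (m + 1)))⟫ = τ * t := by
    intro t y
    have hy : ⟪ξ, (y : EuclideanSpace ℝ (Fin (m + 1)))⟫ = 0 :=
      (Submodule.mem_orthogonal _ _).1 y.2 ξ (Submodule.mem_span_singleton_self ξ)
    rw [inner_add_right, real_inner_smul_left, real_inner_smul_left, hy,
      real_inner_smul_right, real_inner_self_eq_norm_sq, hξ]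
    ring
  have hcomp : ∀ p : ℝ × K, g (Φ p)
      = (f (p.1 • ξ + (p.2 : EuclideanSpace ℝ (Fin (m + 1)))) : ℂ) * Complex.exp (-Complex.I * (τ * p.1)) := by
    intro p
    rw [hg]
    simp only
    rw [hΦap p.1 p.2, hinner p.1 p.2, Complex.ofReal_mul]
  have hFint : Integrable (fun p : ℝ × K =>
      (f (p.1 • ξ + (p.2 : EuclideanSpace ℝ (Fin (m + 1)))) : ℂ) * Complex.exp (-Complex.I * (τ * p.1)))
      ((volume : Measure ℝ).prod (volume : Measure K)) := by
    have h1 : Integrable (g ∘ Φ) :=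
      (hΦmp.integrable_comp_emb Φ.measurableEmbedding).2 hgint
    have h2 : (g ∘ Φ) = fun p : ℝ × K =>
        (f (p.1 • ξ + (p.2 : EuclideanSpace ℝ (Fin (m + 1)))) : ℂ) * Complex.exp (-Complex.I * (τ * p.1)) :=
      funext hcomp
    rw [h2] at h1
    rwa [Measure.volume_eq_prod] at h1
  calc (∫ x : EuclideanSpace ℝ (Fin (m + 1)), g x) = ∫ p : ℝ × K, g (Φ p) :=
        (hΦmp.integral_comp Φ.measurableEmbedding g).symm
    _ = ∫ p : ℝ × K,
          (f (p.1 • ξ + (p.2 : EuclideanSpace ℝ (Fin (m + 1)))) : ℂ) * Complex.exp (-Complex.I * (τ * p.1)) := by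
        exact integral_congr_ae (Filter.Eventually.of_forall hcomp)
    _ = ∫ t : ℝ, ∫ y : K,
          (f (t • ξ + (y : EuclideanSpace ℝ (Fin (m + 1)))) : ℂ) * Complex.exp (-Complex.I * (τ * t)) := by
        rw [Measure.volume_eq_prod]
        exact integral_prod _ hFint
    _ = ∫ X : ℝ, (tomogram (fun x => f x) ξ X : ℂ) * Complex.exp (-Complex.I * (τ * X)) := by
        refine integral_congr_ae (Filter.Eventually.of_forall fun t => ?_)
        dsimp only
        rw [integral_mul_const]
        congr 1
        exact integral_ofReal (𝕜 := ℂ)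
          (f := fun y : K => f (t • ξ + (y : EuclideanSpace ℝ (Fin (m + 1)))))
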